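/- Let {A_n}, {B_n} be sequences of invertible bounded operators on a Banach space B, 0 < α₂ < α₁, ℓ ≥ 1, and closed subspaces E, E′, F, F′ of a closed subspace B₀ with B₀ = E ⊕ E′ = F ⊕ F′. Suppose for some fixed n: (i) ‖A_n u‖ ≤ ℓ α₂ⁿ ‖u‖ for u ∈ E and ‖A_n v‖ ≥ ℓ⁻¹ α₁ⁿ ‖v‖ for v ∈ E′; (ii) the same bounds hold for B_n on F and F′; (iii) max{‖v‖, ‖w‖} ≤ ℓ ‖v+w‖ whenever v ∈ E, w ∈ E′ or v ∈ F, w ∈ F′. Then for every δ < 1 and a ≥ α₁ such that (α₂/a)^{n+1} ≤ δ < (α₂/a)^n and ‖A_n − B_n‖ ≤ δ aⁿ, one has d̂(E,F) ≤ (4+2ℓ)·ℓ²·(α₁/α₂)·δ^{log(α₂/α₁)/log(α₂/a)}. -/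

import Mathlib

open Metric

variable {B : Type*} [NormedAddCommGroup B] [NormedSpace ℝ B]

/-- The unit sphere of a subspace. -/
def unitSph (E : Submodule ℝ B) : Set B := {v : B | v ∈ E ∧ ‖v‖ = 1}

/-- `dist(E,F) = sup_{v ∈ S_E} dist(v, S_F)`. -/
noncomputable def distSphOne (E F : Submodule ℝ B) : ℝ :=
  sSup {r : ℝ | ∃ v ∈ unitSph E, r = infDist v (unitSph F)}

/-- The Hausdorff distance between unit spheres `d̂(E,F)`. -/
noncomputable def distSphHat (E F : Submodule ℝ B) : ℝ :=
  max (distSphOne E F) (distSphOne F E)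

set_option maxHeartbeats 1000000 in
/-- Comparison of subspaces for two sequences of invertible operators with a dominated
splitting: under the expansion/contraction bounds (i)–(iii), if `‖A_n − B_n‖ ≤ δ aⁿ`
with `(α₂/a)^{n+1} ≤ δ < (α₂/a)^n`, then
`d̂(E,F) ≤ (4+2ℓ) ℓ² (α₁/α₂) δ^{log(α₂/α₁)/log(α₂/a)}`. -/
theorem subspace_comparison [CompleteSpace B]
    (An Bn : ℕ → (B →L[ℝ] B)ˣ)
    (α₁ α₂ ℓ : ℝ) (hα₂ : 0 < α₂) (hα : α₂ < α₁) (hℓ : 1 ≤ ℓ)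
    (B₀ E E' F F' : Submodule ℝ B)
    (hEc : IsClosed (E : Set B)) (hE'c : IsClosed (E' : Set B))
    (hFc : IsClosed (F : Set B)) (hF'c : IsClosed (F' : Set B))
    (hB₀c : IsClosed (B₀ : Set B))
    (hEE' : E ⊔ E' = B₀) (hEE'd : E ⊓ E' = ⊥)
    (hFF' : F ⊔ F' = B₀) (hFF'd : F ⊓ F' = ⊥)
    (n : ℕ)
    (hAE : ∀ u ∈ E, ‖(An n : B →L[ℝ] B) u‖ ≤ ℓ * α₂ ^ n * ‖u‖)
    (hAE' : ∀ v ∈ E', ℓ⁻¹ * α₁ ^ n * ‖v‖ ≤ ‖(An n : B →L[ℝ] B) v‖)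
    (hBF : ∀ u ∈ F, ‖(Bn n : B →L[ℝ] B) u‖ ≤ ℓ * α₂ ^ n * ‖u‖)
    (hBF' : ∀ v ∈ F', ℓ⁻¹ * α₁ ^ n * ‖v‖ ≤ ‖(Bn n : B →L[ℝ] B) v‖)
    (hdomE : ∀ v ∈ E, ∀ w ∈ E', max ‖v‖ ‖w‖ ≤ ℓ * ‖v + w‖)
    (hdomF : ∀ v ∈ F, ∀ w ∈ F', max ‖v‖ ‖w‖ ≤ ℓ * ‖v + w‖)
    (δ a : ℝ) (hδ : δ < 1) (ha : α₁ ≤ a)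
    (hδ₁ : (α₂ / a) ^ (n + 1) ≤ δ) (hδ₂ : δ < (α₂ / a) ^ n)
    (hAB : ‖(An n : B →L[ℝ] B) - (Bn n : B →L[ℝ] B)‖ ≤ δ * a ^ n) :
    distSphHat E F ≤
      (4 + 2 * ℓ) * ℓ ^ 2 * (α₁ / α₂) *
        δ ^ (Real.log (α₂ / α₁) / Real.log (α₂ / a)) := by
  have hα₁ : 0 < α₁ := lt_trans hα₂ hα
  have ha0 : 0 < a := lt_of_lt_of_le hα₁ ha
  have hℓ0 : 0 < ℓ := lt_of_lt_of_le one_pos hℓ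
  have hδ0 : 0 < δ := lt_of_lt_of_le (pow_pos (div_pos hα₂ ha0) (n + 1)) hδ₁
  set e : ℝ := Real.log (α₂ / α₁) / Real.log (α₂ / a) with he_def
  set K : ℝ := 2 * ℓ * ((ℓ * α₂ ^ n + ℓ ^ 2 * α₂ ^ n + δ * a ^ n) / α₁ ^ n) with hK_def
  have hα₁n : (0:ℝ) < α₁ ^ n := pow_pos hα₁ n
  -- the key one-sided estimate
  have key : ∀ (T S : B →L[ℝ] B) (G G' : Submodule ℝ B),
      G ⊔ G' = B₀ →
      (∀ u ∈ G, ‖S u‖ ≤ ℓ * α₂ ^ n * ‖u‖) →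
      (∀ v ∈ G', ℓ⁻¹ * α₁ ^ n * ‖v‖ ≤ ‖S v‖) →
      (∀ v ∈ G, ∀ w ∈ G', max ‖v‖ ‖w‖ ≤ ℓ * ‖v + w‖) →
      ‖T - S‖ ≤ δ * a ^ n →
      ∀ v : B, v ∈ B₀ → ‖v‖ = 1 → ‖T v‖ ≤ ℓ * α₂ ^ n →
      infDist v (unitSph G) ≤ K := by
    intro T S G G' hGG' hSG hSG' hdom hTS v hvB hv1 hTv
    have hvG : v ∈ G ⊔ G' := by rw [hGG']; exact hvB
    obtain ⟨w, hw, w', hw', hsum⟩ := Submodule.mem_sup.mp hvG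
    have hwle : ‖w‖ ≤ ℓ := by
      have h := hdom w hw w' hw'
      rw [hsum, hv1, mul_one] at h
      exact le_trans (le_max_left _ _) h
    have hSv : ‖S v‖ ≤ ℓ * α₂ ^ n + δ * a ^ n := by
      have h1 : S v = T v - (T - S) v := by simp
      have h2 : ‖(T - S) v‖ ≤ (δ * a ^ n) * ‖v‖ :=
        le_trans ((T - S).le_opNorm v) (mul_le_mul_of_nonneg_right hTS (norm_nonneg v))
      rw [hv1, mul_one] at h2
      rw [h1]
      exact le_trans (norm_sub_le _ _) (by linarith)
    have hSw : ‖S w‖ ≤ ℓ * α₂ ^ n * ℓ := by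
      refine le_trans (hSG w hw) ?_
      have : (0:ℝ) ≤ ℓ * α₂ ^ n := by positivity
      exact mul_le_mul_of_nonneg_left hwle this
    have hSw' : ‖S w'‖ ≤ ℓ * α₂ ^ n + δ * a ^ n + ℓ * α₂ ^ n * ℓ := by
      have hsw : S w' = S v - S w := by
        rw [← hsum]; simp
      rw [hsw]
      exact le_trans (norm_sub_le _ _) (by linarith)
    have hw'le : ‖w'‖ ≤ ℓ * ((ℓ * α₂ ^ n + ℓ ^ 2 * α₂ ^ n + δ * a ^ n) / α₁ ^ n) := by
      have h := le_trans (hSG' w' hw') hSw'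
      have h3 : ‖w'‖ * α₁ ^ n ≤ ℓ * (ℓ * α₂ ^ n + ℓ ^ 2 * α₂ ^ n + δ * a ^ n) := by
        have h4 := mul_le_mul_of_nonneg_left h hℓ0.le
        have h5 : ℓ * (ℓ⁻¹ * α₁ ^ n * ‖w'‖) = ‖w'‖ * α₁ ^ n := by
          field_simp
        rw [h5] at h4
        nlinarith
      calc ‖w'‖ = ‖w'‖ * α₁ ^ n / α₁ ^ n := by field_simp
        _ ≤ ℓ * (ℓ * α₂ ^ n + ℓ ^ 2 * α₂ ^ n + δ * a ^ n) / α₁ ^ n := by gcongr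
        _ = ℓ * ((ℓ * α₂ ^ n + ℓ ^ 2 * α₂ ^ n + δ * a ^ n) / α₁ ^ n) := mul_div_assoc _ _ _
    have hdist : infDist v (unitSph G) ≤ 2 * ‖w'‖ := by
      by_cases hw0 : w = 0
      · have hw'1 : ‖w'‖ = 1 := by
          rw [hw0, zero_add] at hsum; rw [hsum]; exact hv1
        rcases (unitSph G).eq_empty_or_nonempty with hemp | ⟨u, hu⟩
        · rw [hemp, infDist_empty, hw'1]; norm_num
        · refine le_trans (infDist_le_dist_of_mem hu) ?_
          rw [dist_eq_norm, hw'1]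
          have h6 := norm_sub_le v u
          rw [hv1, hu.2] at h6
          linarith
      · have hwn : ‖w‖ ≠ 0 := norm_ne_zero_iff.mpr hw0
        have hwpos : (0:ℝ) < ‖w‖ := lt_of_le_of_ne (norm_nonneg w) (Ne.symm hwn)
        set u : B := ‖w‖⁻¹ • w with hu_def
        have huG : u ∈ unitSph G := by
          refine ⟨G.smul_mem _ hw, ?_⟩
          rw [hu_def, norm_smul, norm_inv, norm_norm, inv_mul_cancel₀ hwn]
        refine le_trans (infDist_le_dist_of_mem huG) ?_
        rw [dist_eq_norm]
        have h1 : ‖v - w‖ = ‖w'‖ := by rw [← hsum]; simp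
        have h2 : ‖w - u‖ = |‖w‖ - 1| := by
          have : w - u = (1 - ‖w‖⁻¹) • w := by
            rw [hu_def, sub_smul, one_smul]
          rw [this, norm_smul, Real.norm_eq_abs, ← abs_of_pos hwpos, ← abs_mul]
          rw [abs_of_pos hwpos]
          congr 1
          field_simp
        have h3 : |‖w‖ - 1| ≤ ‖w'‖ := by
          have h7 := abs_norm_sub_norm_le w v
          rw [hv1] at h7
          have h8 : ‖w - v‖ = ‖w'‖ := by
            rw [← norm_neg, neg_sub, h1]
          rw [h8] at h7
          exact h7
        calc ‖v - u‖ = ‖(v - w) + (w - u)‖ := by rw [sub_add_sub_cancel]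
          _ ≤ ‖v - w‖ + ‖w - u‖ := norm_add_le _ _
          _ ≤ ‖w'‖ + ‖w'‖ := by rw [h1, h2]; linarith
          _ = 2 * ‖w'‖ := by ring
    refine le_trans hdist ?_
    rw [hK_def]
    nlinarith [hw'le]
  -- the final numerical comparison : K ≤ RHS
  have hδa : δ * a ^ n ≤ α₂ ^ n := by
    have h1 : δ * a ^ n ≤ (α₂ / a) ^ n * a ^ n :=
      mul_le_mul_of_nonneg_right hδ₂.le (by positivity)
    have h2 : (α₂ / a) ^ n * a ^ n = α₂ ^ n := by
      rw [div_pow]; field_simp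
    linarith [h2 ▸ h1]
  have hca : (0:ℝ) < α₂ / a := div_pos hα₂ ha0
  have hca1 : α₂ / a < 1 := (div_lt_one ha0).mpr (lt_of_lt_of_le hα ha)
  have hba : (0:ℝ) < α₂ / α₁ := div_pos hα₂ hα₁
  have hba1 : α₂ / α₁ < 1 := (div_lt_one hα₁).mpr hα
  have hlc : Real.log (α₂ / a) < 0 := Real.log_neg hca hca1
  have hlb : Real.log (α₂ / α₁) < 0 := Real.log_neg hba hba1
  have he0 : 0 ≤ e := le_of_lt (div_pos_of_neg_of_neg hlb hlc)
  have hstep4 : (α₂ / α₁) ^ (n + 1) ≤ δ ^ e := by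
    have h5 : ((α₂ / a) ^ (n + 1) : ℝ) ^ e ≤ δ ^ e :=
      Real.rpow_le_rpow (by positivity) hδ₁ he0
    have h6 : (((α₂ / a) ^ (n + 1) : ℝ)) ^ e = (α₂ / α₁) ^ (n + 1) := by
      rw [← Real.rpow_natCast (α₂ / a) (n + 1), ← Real.rpow_mul hca.le,
        Real.rpow_def_of_pos hca, ← Real.rpow_natCast (α₂ / α₁) (n + 1),
        Real.rpow_def_of_pos hba]
      congr 1
      rw [he_def]
      field_simp [hlc.ne]
    rw [← h6]
    exact h5
  have hKRHS : K ≤ (4 + 2 * ℓ) * ℓ ^ 2 * (α₁ / α₂) * δ ^ e := by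
    have h1 : K ≤ (4 + 2 * ℓ) * ℓ ^ 2 * (α₂ ^ n / α₁ ^ n) := by
      rw [hK_def]
      have h2 : 2 * ℓ * (ℓ * α₂ ^ n + ℓ ^ 2 * α₂ ^ n + δ * a ^ n) ≤
          (4 + 2 * ℓ) * ℓ ^ 2 * α₂ ^ n := by
        nlinarith [pow_pos hα₂ n, hδa, mul_pos (mul_pos hℓ0 hℓ0) (pow_pos hα₂ n),
          mul_nonneg (mul_nonneg hℓ0.le (sub_nonneg.mpr hℓ)) (pow_pos hα₂ n).le]
      calc 2 * ℓ * ((ℓ * α₂ ^ n + ℓ ^ 2 * α₂ ^ n + δ * a ^ n) / α₁ ^ n)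
          = 2 * ℓ * (ℓ * α₂ ^ n + ℓ ^ 2 * α₂ ^ n + δ * a ^ n) / α₁ ^ n := by ring
        _ ≤ (4 + 2 * ℓ) * ℓ ^ 2 * α₂ ^ n / α₁ ^ n := by gcongr
        _ = (4 + 2 * ℓ) * ℓ ^ 2 * (α₂ ^ n / α₁ ^ n) := by ring
    have h3 : α₂ ^ n / α₁ ^ n ≤ (α₁ / α₂) * δ ^ e := by
      have h4 : α₂ ^ n / α₁ ^ n = (α₁ / α₂) * (α₂ / α₁) ^ (n + 1) := by
        rw [pow_succ]
        field_simp
        ring_nf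
        rw [mul_assoc, ← mul_pow, mul_inv_cancel₀ hα₁.ne', one_pow, mul_one]
      rw [h4]
      exact mul_le_mul_of_nonneg_left hstep4 (by positivity)
    calc K ≤ (4 + 2 * ℓ) * ℓ ^ 2 * (α₂ ^ n / α₁ ^ n) := h1
      _ ≤ (4 + 2 * ℓ) * ℓ ^ 2 * ((α₁ / α₂) * δ ^ e) := by
          refine mul_le_mul_of_nonneg_left h3 (by positivity)
      _ = (4 + 2 * ℓ) * ℓ ^ 2 * (α₁ / α₂) * δ ^ e := by ring
  have hK0 : 0 ≤ K := by rw [hK_def]; positivity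
  have hRHS0 : 0 ≤ (4 + 2 * ℓ) * ℓ ^ 2 * (α₁ / α₂) * δ ^ e := le_trans hK0 hKRHS
  have hEF : distSphOne E F ≤ K := by
    refine Real.sSup_le ?_ hK0
    rintro r ⟨v, ⟨hvE, hv1⟩, rfl⟩
    have hvB : v ∈ B₀ := by
      rw [← hEE']; exact Submodule.mem_sup_left hvE
    have hTv : ‖(An n : B →L[ℝ] B) v‖ ≤ ℓ * α₂ ^ n := by
      have h := hAE v hvE; rw [hv1, mul_one] at h; exact h
    exact key _ _ F F' hFF' hBF hBF' hdomF hAB v hvB hv1 hTv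
  have hFE : distSphOne F E ≤ K := by
    refine Real.sSup_le ?_ hK0
    rintro r ⟨v, ⟨hvF, hv1⟩, rfl⟩
    have hvB : v ∈ B₀ := by
      rw [← hFF']; exact Submodule.mem_sup_left hvF
    have hTv : ‖(Bn n : B →L[ℝ] B) v‖ ≤ ℓ * α₂ ^ n := by
      have h := hBF v hvF; rw [hv1, mul_one] at h; exact h
    have hBA : ‖(Bn n : B →L[ℝ] B) - (An n : B →L[ℝ] B)‖ ≤ δ * a ^ n := by
      rw [norm_sub_rev]; exact hAB
    exact key _ _ E E' hEE' hAE hAE' hdomE hBA v hvB hv1 hTv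
  exact le_trans (max_le hEF hFE) hKRHS
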